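/- For all n ≥ 4, every (n,4,9)-multigraph with all edge multiplicities in {0,1,2} has product of edge multiplicities at most 2^(ex(n,{C₃,C₄})), where ex(n,{C₃,C₄}) is the maximum number of edges in an n-vertex graph containing no triangle and no 4-cycle. -/

import Mathlib

open Finset

def pairs (n : ℕ) (X : Finset (Fin n)) : Finset (Fin n × Fin n) :=
  (X ×ˢ X).filter (fun p => p.1 < p.2)

def mgS (n : ℕ) (w : Fin n → Fin n → ℕ) (X : Finset (Fin n)) : ℕ :=
  ∑ p ∈ pairs n X, w p.1 p.2

def mgP (n : ℕ) (w : Fin n → Fin n → ℕ) (X : Finset (Fin n)) : ℕ :=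
  ∏ p ∈ pairs n X, w p.1 p.2

def IsNSQ (n s q : ℕ) (w : Fin n → Fin n → ℕ) : Prop :=
  ∀ X : Finset (Fin n), X.card = s → mgS n w X ≤ q

def C3C4Free {n : ℕ} (G : SimpleGraph (Fin n)) : Prop :=
  (∀ x y z : Fin n, G.Adj x y → G.Adj y z → G.Adj x z → False) ∧
  (∀ a b c d : Fin n, a ≠ c → b ≠ d →
    G.Adj a b → G.Adj b c → G.Adj c d → G.Adj d a → False)

noncomputable def exC34 (n : ℕ) : ℕ :=
  sSup {m | ∃ G : SimpleGraph (Fin n), C3C4Free G ∧ m = Nat.card G.edgeSet}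

lemma card_filter_ext {α : Type*} (s : Finset α) (p q : α → Prop)
    (hp : DecidablePred p) (hq : DecidablePred q) (h : ∀ x, p x ↔ q x) :
    (@Finset.filter α p hp s).card = (@Finset.filter α q hq s).card := by
  congr 1
  ext x
  rw [Finset.mem_filter, Finset.mem_filter, h x]

lemma mgS_double (n : ℕ) (w : Fin n → Fin n → ℕ) (hsym : ∀ i j, w i j = w j i)
    (X : Finset (Fin n)) :
    2 * mgS n w X = ∑ p ∈ (X ×ˢ X).filter (fun p => p.1 ≠ p.2), w p.1 p.2 := by
  have hsplit : (X ×ˢ X).filter (fun p => p.1 ≠ p.2)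
      = (X ×ˢ X).filter (fun p => p.1 < p.2) ∪ (X ×ˢ X).filter (fun p => p.2 < p.1) := by
    ext p
    simp only [Finset.mem_filter, Finset.mem_union]
    constructor
    · rintro ⟨h1, h2⟩
      rcases lt_or_gt_of_ne h2 with h | h
      · exact Or.inl ⟨h1, h⟩
      · exact Or.inr ⟨h1, h⟩
    · rintro (⟨h1, h2⟩ | ⟨h1, h2⟩)
      · exact ⟨h1, ne_of_lt h2⟩
      · exact ⟨h1, (ne_of_lt h2).symm⟩
  have hdisj : Disjoint ((X ×ˢ X).filter (fun p => p.1 < p.2))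
      ((X ×ˢ X).filter (fun p => p.2 < p.1)) := by
    rw [Finset.disjoint_left]
    intro p hp hq
    simp only [Finset.mem_filter] at hp hq
    exact absurd (hp.2.trans hq.2) (lt_irrefl _)
  rw [hsplit, Finset.sum_union hdisj]
  have hswap : ∑ p ∈ (X ×ˢ X).filter (fun p => p.2 < p.1), w p.1 p.2
      = ∑ p ∈ (X ×ˢ X).filter (fun p => p.1 < p.2), w p.1 p.2 := by
    refine Finset.sum_nbij' Prod.swap Prod.swap ?_ ?_ ?_ ?_ ?_
    · intro p hp; simp only [Finset.mem_filter, Finset.mem_product] at hp ⊢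
      exact ⟨⟨hp.1.2, hp.1.1⟩, hp.2⟩
    · intro p hp; simp only [Finset.mem_filter, Finset.mem_product] at hp ⊢
      exact ⟨⟨hp.1.2, hp.1.1⟩, hp.2⟩
    · intro p _; rfl
    · intro p _; rfl
    · intro p _; exact hsym p.1 p.2
  rw [hswap, mgS, pairs]
  ring
lemma sum_four (n : ℕ) (w : Fin n → Fin n → ℕ) (hsym : ∀ i j, w i j = w j i)
    (h49 : IsNSQ n 4 9 w) (a b c d : Fin n)
    (hab : a ≠ b) (hac : a ≠ c) (had : a ≠ d) (hbc : b ≠ c) (hbd : b ≠ d) (hcd : c ≠ d) :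
    w a b + w a c + w a d + w b c + w b d + w c d ≤ 9 := by
  set X : Finset (Fin n) := {a, b, c, d} with hX
  have hna : a ∉ ({b, c, d} : Finset (Fin n)) := by
    simp only [Finset.mem_insert, Finset.mem_singleton]
    push_neg
    exact ⟨hab, hac, had⟩
  have hnb : b ∉ ({c, d} : Finset (Fin n)) := by
    simp only [Finset.mem_insert, Finset.mem_singleton]
    push_neg
    exact ⟨hbc, hbd⟩
  have hnc : c ∉ ({d} : Finset (Fin n)) := by
    simpa using hcd
  have hcard : X.card = 4 := by
    rw [hX]
    rw [Finset.card_insert_of_notMem hna,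
        Finset.card_insert_of_notMem hnb,
        Finset.card_insert_of_notMem hnc]
    rfl
  have h2 := mgS_double n w hsym X
  have hexpand : ∑ p ∈ (X ×ˢ X).filter (fun p => p.1 ≠ p.2), w p.1 p.2
      = w a b + w b a + w a c + w c a + w a d + w d a + w b c + w c b
        + w b d + w d b + w c d + w d c := by
    rw [Finset.sum_filter, Finset.sum_product]
    rw [hX]
    rw [Finset.sum_insert hna,
        Finset.sum_insert hnb,
        Finset.sum_insert hnc,
        Finset.sum_singleton]
    rw [Finset.sum_insert hna,
        Finset.sum_insert hnb,
        Finset.sum_insert hnc,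
        Finset.sum_singleton]
    rw [Finset.sum_insert hna,
        Finset.sum_insert hnb,
        Finset.sum_insert hnc,
        Finset.sum_singleton]
    rw [Finset.sum_insert hna,
        Finset.sum_insert hnb,
        Finset.sum_insert hnc,
        Finset.sum_singleton]
    rw [Finset.sum_insert hna,
        Finset.sum_insert hnb,
        Finset.sum_insert hnc,
        Finset.sum_singleton]
    simp only [ne_eq, hab, hac, had, hbc, hbd, hcd, hab.symm, hac.symm, had.symm, hbc.symm,
      hbd.symm, hcd.symm, not_false_eq_true, not_true_eq_false, if_true, if_false, ite_true,
      ite_false, eq_self_iff_true]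
    ring
  have h9 := h49 X hcard
  rw [hexpand] at h2
  rw [hsym b a, hsym c a, hsym d a, hsym c b, hsym d b, hsym d c] at h2
  omega

open scoped Classical in
noncomputable def ec {n : ℕ} (G : SimpleGraph (Fin n)) : ℕ :=
  ((univ ×ˢ univ : Finset (Fin n × Fin n)).filter fun p => p.1 < p.2 ∧ G.Adj p.1 p.2).card

open scoped Classical in
lemma card_edgeSet_eq_ec {n : ℕ} (G : SimpleGraph (Fin n)) : Nat.card G.edgeSet = ec G := by
  rw [Nat.card_eq_fintype_card, ← SimpleGraph.edgeFinset_card]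
  rw [ec]
  refine (Finset.card_bij (fun p _ => s(p.1, p.2)) ?_ ?_ ?_).symm
  · intro p hp
    simp only [Finset.mem_filter] at hp
    rw [SimpleGraph.mem_edgeFinset]
    exact hp.2.2
  · intro p hp q hq h
    simp only [Finset.mem_filter] at hp hq
    rw [Sym2.eq_iff] at h
    rcases h with ⟨h1, h2⟩ | ⟨h1, h2⟩
    · exact Prod.ext h1 h2
    · exfalso
      have hlt : q.2 < q.1 := by rw [← h1, ← h2]; exact hp.2.1
      exact absurd hlt (not_lt.mpr hq.2.1.le)
  · intro e he
    induction e using Sym2.ind with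
    | _ x y =>
      rw [SimpleGraph.mem_edgeFinset, SimpleGraph.mem_edgeSet] at he
      rcases lt_or_gt_of_ne he.ne with h | h
      · exact ⟨(x, y), by simp [he, h], rfl⟩
      · exact ⟨(y, x), by simp [he.symm, h], Sym2.eq_swap⟩

open scoped Classical

set_option maxHeartbeats 1000000 in
lemma key {n : ℕ} (hn : 4 ≤ n) (H : SimpleGraph (Fin n))
    (hL1 : ∀ x y z u : Fin n, H.Adj x y → H.Adj y z → H.Adj x z →
      u ≠ x → u ≠ y → u ≠ z → ¬ H.Adj x u)
    (hL2 : ∀ a b c d : Fin n, a ≠ c → b ≠ d → H.Adj a b → H.Adj b c → H.Adj c d →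
      H.Adj d a → False) :
    ∃ G : SimpleGraph (Fin n), C3C4Free G ∧ ec H ≤ ec G := by
  set inTri : Fin n → Prop := fun v => ∃ y z, H.Adj v y ∧ H.Adj v z ∧ H.Adj y z with hinTri
  have hdeg : ∀ {x y z u : Fin n}, H.Adj x y → H.Adj x z → H.Adj y z → H.Adj x u →
      u = y ∨ u = z := by
    intro x y z u hxy hxz hyz hxu
    by_contra hcon
    push_neg at hcon
    exact hL1 x y z u hxy hyz hxz hxu.ne' hcon.1 hcon.2 hxu
  have hcross : ∀ x y, inTri x → H.Adj x y → inTri y := by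
    rintro x y ⟨p, q, hxp, hxq, hpq⟩ hxy
    rcases hdeg hxp hxq hpq hxy with rfl | rfl
    · exact ⟨x, q, hxp.symm, hpq, hxq⟩
    · exact ⟨x, p, hxq.symm, hpq.symm, hxp⟩
  set Δf : Finset (Fin n) := univ.filter inTri with hΔf
  set Hpairs : Finset (Fin n × Fin n) :=
    (univ ×ˢ univ).filter (fun p => p.1 < p.2 ∧ H.Adj p.1 p.2) with hHpairs
  -- handshake: number of triangle-internal edges equals |Δf|
  have step2 : (Hpairs.filter fun p => inTri p.1 ∧ inTri p.2).card = Δf.card := by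
    set H' : SimpleGraph (Fin n) :=
      { Adj := fun x y => H.Adj x y ∧ inTri x ∧ inTri y
        symm := ⟨fun x y h => ⟨h.1.symm, h.2.2, h.2.1⟩⟩
        loopless := ⟨fun x h => H.loopless.irrefl x h.1⟩ } with hH'
    haveI : DecidableRel H'.Adj := Classical.decRel _
    have hec : (Hpairs.filter fun p => inTri p.1 ∧ inTri p.2).card = H'.edgeFinset.card := by
      have h1 : (Hpairs.filter fun p => inTri p.1 ∧ inTri p.2)
          = ((univ ×ˢ univ : Finset (Fin n × Fin n)).filter
              fun p => p.1 < p.2 ∧ H'.Adj p.1 p.2) := by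
        ext p
        simp only [hHpairs, Finset.mem_filter, hH']
        tauto
      rw [h1]
      refine Finset.card_bij (fun p _ => s(p.1, p.2)) ?_ ?_ ?_
      · intro p hp
        simp only [Finset.mem_filter] at hp
        rw [SimpleGraph.mem_edgeFinset]
        exact hp.2.2
      · intro p hp q hq h
        simp only [Finset.mem_filter] at hp hq
        rw [Sym2.eq_iff] at h
        rcases h with ⟨h1, h2⟩ | ⟨h1, h2⟩
        · exact Prod.ext h1 h2
        · exfalso
          have hlt : q.2 < q.1 := by rw [← h1, ← h2]; exact hp.2.1
          exact absurd hlt (not_lt.mpr hq.2.1.le)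
      · intro e he
        induction e using Sym2.ind with
        | _ x y =>
          rw [SimpleGraph.mem_edgeFinset, SimpleGraph.mem_edgeSet] at he
          rcases lt_or_gt_of_ne he.ne with h | h
          · exact ⟨(x, y), by simp [he, h], rfl⟩
          · exact ⟨(y, x), by simp [he.symm, h], Sym2.eq_swap⟩
    have hdegsum := SimpleGraph.sum_degrees_eq_twice_card_edges H'
    have hdegv : ∀ v ∈ Δf, H'.degree v = 2 := by
      intro v hv
      rw [hΔf, Finset.mem_filter] at hv
      obtain ⟨y, z, hvy, hvz, hyz⟩ := hv.2
      have hnb : H'.neighborFinset v = {y, z} := by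
        ext u
        rw [SimpleGraph.mem_neighborFinset]
        simp only [Finset.mem_insert, Finset.mem_singleton]
        constructor
        · intro h
          exact hdeg hvy hvz hyz h.1
        · rintro (h | h)
          · rw [h]
            exact ⟨hvy, ⟨y, z, hvy, hvz, hyz⟩, hcross v y ⟨y, z, hvy, hvz, hyz⟩ hvy⟩
          · rw [h]
            exact ⟨hvz, ⟨y, z, hvy, hvz, hyz⟩, hcross v z ⟨y, z, hvy, hvz, hyz⟩ hvz⟩
      rw [SimpleGraph.degree, hnb]
      rw [Finset.card_insert_of_notMem (by simpa using hyz.ne), Finset.card_singleton]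
    have hdegv0 : ∀ v ∈ (univ : Finset (Fin n)).filter (fun v => ¬ inTri v),
        H'.degree v = 0 := by
      intro v hv
      rw [Finset.mem_filter] at hv
      rw [SimpleGraph.degree, Finset.card_eq_zero]
      ext u
      rw [SimpleGraph.mem_neighborFinset]
      simp only [Finset.notMem_empty, iff_false]
      intro h
      exact hv.2 h.2.1
    have hsum : ∑ v : Fin n, H'.degree v = 2 * Δf.card := by
      rw [← Finset.sum_filter_add_sum_filter_not univ inTri (fun v => H'.degree v)]
      rw [Finset.sum_congr rfl hdegv, Finset.sum_congr rfl hdegv0]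
      simp [mul_comm]
    omega
  -- split of H-pairs by inTri
  have hHsplit : Hpairs.filter (fun p => inTri p.1 ∨ inTri p.2)
      = Hpairs.filter (fun p => inTri p.1 ∧ inTri p.2) := by
    ext p
    simp only [Finset.mem_filter, hHpairs]
    constructor
    · rintro ⟨h1, h2⟩
      refine ⟨h1, ?_⟩
      rcases h2 with h | h
      · exact ⟨h, hcross _ _ h h1.2.2⟩
      · exact ⟨hcross _ _ h h1.2.2.symm, h⟩
    · rintro ⟨h1, h2⟩
      exact ⟨h1, Or.inl h2.1⟩
  rcases em (∀ v : Fin n, inTri v) with hall | hex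
  · have hEH : ec H = n := by
      have h1 : ec H = Hpairs.card := by
        rw [hHpairs]; unfold ec
        congr 1 <;> apply Finset.filter_congr_decidable
      have hHfull : Hpairs.filter (fun p => inTri p.1 ∧ inTri p.2) = Hpairs :=
        Finset.filter_true_of_mem (fun p _ => ⟨hall p.1, hall p.2⟩)
      have hΔfull : Δf.card = n := by
        rw [hΔf, Finset.filter_true_of_mem (fun v _ => hall v)]
        simp
      rw [h1, ← hHfull, step2, hΔfull]
    have hn0 : 0 < n := by omega
    set v : Fin n := ⟨0, hn0⟩ with hv
    obtain ⟨y, z, hvy, hvz, hyz⟩ := hall v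
    have hu : ∃ u : Fin n, u ∉ ({v, y, z} : Finset (Fin n)) := by
      by_contra hcon
      push_neg at hcon
      have hsub : (univ : Finset (Fin n)) ⊆ {v, y, z} := fun u _ => hcon u
      have := Finset.card_le_card hsub
      have h3 : ({v, y, z} : Finset (Fin n)).card ≤ 3 := by
        apply le_trans (Finset.card_insert_le _ _)
        apply Nat.succ_le_succ
        apply le_trans (Finset.card_insert_le _ _)
        simp
      simp only [Finset.card_univ, Fintype.card_fin] at this
      omega
    obtain ⟨u, hum⟩ := hu
    simp only [Finset.mem_insert, Finset.mem_singleton] at hum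
    push_neg at hum
    obtain ⟨huv, huy, huz⟩ := hum
    obtain ⟨p, q, hup, huq, hpq⟩ := hall u
    -- neighbors of v are exactly y, z; of y are v, z; of z are v, y
    have hnbv : ∀ t, H.Adj v t → t = y ∨ t = z := fun t ht => hdeg hvy hvz hyz ht
    have hnby : ∀ t, H.Adj y t → t = v ∨ t = z := fun t ht => hdeg hvy.symm hyz hvz ht
    have hnbz : ∀ t, H.Adj z t → t = v ∨ t = y := fun t ht => hdeg hvz.symm hyz.symm hvy ht
    have hclean : ∀ t, H.Adj u t → t ≠ v ∧ t ≠ y ∧ t ≠ z := by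
      intro t ht
      refine ⟨?_, ?_, ?_⟩
      · rintro rfl
        rcases hnbv u ht.symm with rfl | rfl
        · exact huy rfl
        · exact huz rfl
      · rintro rfl
        rcases hnby u ht.symm with rfl | rfl
        · exact huv rfl
        · exact huz rfl
      · rintro rfl
        rcases hnbz u ht.symm with rfl | rfl
        · exact huv rfl
        · exact huy rfl
    obtain ⟨hpv, hpy, hpz⟩ := hclean p hup
    obtain ⟨hqv, hqy, hqz⟩ := hclean q huq
    have hvy' : v ≠ y := hvy.ne
    have hvz' : v ≠ z := hvz.ne
    have hyz' : y ≠ z := hyz.ne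
    have hpu : p ≠ u := hup.ne'
    have hqu : q ≠ u := huq.ne'
    have hpq' : p ≠ q := hpq.ne
    have hcard6 : ({v, y, z, u, p, q} : Finset (Fin n)).card = 6 := by
      rw [Finset.card_insert_of_notMem (by
          simp only [Finset.mem_insert, Finset.mem_singleton]; push_neg
          exact ⟨hvy', hvz', fun h => huv h.symm, fun h => hpv h.symm, fun h => hqv h.symm⟩),
        Finset.card_insert_of_notMem (by
          simp only [Finset.mem_insert, Finset.mem_singleton]; push_neg
          exact ⟨hyz', fun h => huy h.symm, fun h => hpy h.symm, fun h => hqy h.symm⟩),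
        Finset.card_insert_of_notMem (by
          simp only [Finset.mem_insert, Finset.mem_singleton]; push_neg
          exact ⟨fun h => huz h.symm, fun h => hpz h.symm, fun h => hqz h.symm⟩),
        Finset.card_insert_of_notMem (by
          simp only [Finset.mem_insert, Finset.mem_singleton]; push_neg
          exact ⟨fun h => hpu h.symm, fun h => hqu h.symm⟩),
        Finset.card_insert_of_notMem (by simpa using hpq'),
        Finset.card_singleton]
    have hn6 : 6 ≤ n := by
      have h := Finset.card_le_univ ({v, y, z, u, p, q} : Finset (Fin n))
      rw [hcard6] at h
      simpa using h
    have hmod : ∀ a b : Fin n, ((a.val + 1) % n = b.val) ↔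
        (a.val + 1 = b.val ∨ (a.val + 1 = n ∧ b.val = 0)) := by
      intro a b
      have ha := a.isLt
      have hb := b.isLt
      rcases Nat.lt_or_ge (a.val + 1) n with h | h
      · rw [Nat.mod_eq_of_lt h]; omega
      · have he : a.val + 1 = n := by omega
        rw [he, Nat.mod_self]; omega
    set C : SimpleGraph (Fin n) :=
      { Adj := fun x y => x ≠ y ∧ ((x.val + 1) % n = y.val ∨ (y.val + 1) % n = x.val)
        symm := ⟨by rintro x y ⟨h1, h2⟩; exact ⟨h1.symm, h2.symm⟩⟩
        loopless := ⟨fun x h => h.1 rfl⟩ } with hC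
    have hvalne : ∀ a b : Fin n, a ≠ b → a.val ≠ b.val := by
      intro a b hab h
      exact hab (Fin.ext h)
    have hfreeC : C3C4Free C := by
      constructor
      · rintro x1 x2 x3 ⟨ne1, r1⟩ ⟨ne2, r2⟩ ⟨ne3, r3⟩
        rw [hmod x1 x2, hmod x2 x1] at r1
        rw [hmod x2 x3, hmod x3 x2] at r2
        rw [hmod x1 x3, hmod x3 x1] at r3
        have e1 := hvalne _ _ ne1
        have e2 := hvalne _ _ ne2
        have e3 := hvalne _ _ ne3
        have := x1.isLt; have := x2.isLt; have := x3.isLt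
        omega
      · rintro a b c d hac hbd ⟨ne1, r1⟩ ⟨ne2, r2⟩ ⟨ne3, r3⟩ ⟨ne4, r4⟩
        rw [hmod a b, hmod b a] at r1
        rw [hmod b c, hmod c b] at r2
        rw [hmod c d, hmod d c] at r3
        rw [hmod d a, hmod a d] at r4
        have e1 := hvalne _ _ ne1
        have e2 := hvalne _ _ ne2
        have e3 := hvalne _ _ ne3
        have e4 := hvalne _ _ ne4
        have e5 := hvalne _ _ hac
        have e6 := hvalne _ _ hbd
        have := a.isLt; have := b.isLt; have := c.isLt; have := d.isLt
        omega
    refine ⟨C, hfreeC, ?_⟩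
    set Cpairs : Finset (Fin n × Fin n) :=
      (univ ×ˢ univ).filter (fun p => p.1 < p.2 ∧ C.Adj p.1 p.2) with hCpairs
    have hEC : ec C = Cpairs.card := by
      rw [hCpairs]; unfold ec
      congr 1 <;> apply Finset.filter_congr_decidable
    have hinj : n ≤ Cpairs.card := by
      set f : Fin n → Fin n × Fin n := fun x =>
        if h : x.val + 1 < n then (x, ⟨x.val + 1, h⟩) else (⟨0, hn0⟩, x) with hf
      have hmaps : ∀ x ∈ (univ : Finset (Fin n)), f x ∈ Cpairs := by
        intro x _
        rw [hf]
        dsimp only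
        by_cases h : x.val + 1 < n
        · rw [dif_pos h, hCpairs, Finset.mem_filter]
          dsimp only
          refine ⟨by simp, ?_, ?_, ?_⟩
          · exact Fin.lt_def.mpr (by simp)
          · exact fun he => absurd (congrArg Fin.val he) (by simp)
          · exact Or.inl (by rw [Nat.mod_eq_of_lt h])
        · rw [dif_neg h, hCpairs, Finset.mem_filter]
          dsimp only
          have hx := x.isLt
          have hxn : x.val + 1 = n := by omega
          refine ⟨by simp, ?_, ?_, ?_⟩
          · exact Fin.lt_def.mpr (by simp; omega)
          · exact fun he => absurd (congrArg Fin.val he) (by simp; omega)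
          · exact Or.inr (by rw [hxn, Nat.mod_self])
      have hinjOn : Set.InjOn f (univ : Finset (Fin n)) := by
        intro x _ y _ h
        rw [hf] at h
        dsimp only at h
        by_cases h1 : x.val + 1 < n <;> by_cases h2 : y.val + 1 < n
        · rw [dif_pos h1, dif_pos h2] at h
          exact congrArg Prod.fst h
        · rw [dif_pos h1, dif_neg h2] at h
          exfalso
          rw [Prod.ext_iff] at h
          have e1 : x.val = 0 := congrArg Fin.val h.1
          have e2 : x.val + 1 = y.val := congrArg Fin.val h.2
          have := y.isLt
          omega
        · rw [dif_neg h1, dif_pos h2] at h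
          exfalso
          rw [Prod.ext_iff] at h
          have e1 : y.val = 0 := (congrArg Fin.val h.1).symm
          have e2 : y.val + 1 = x.val := (congrArg Fin.val h.2).symm
          have := x.isLt
          omega
        · rw [dif_neg h1, dif_neg h2] at h
          rw [Prod.ext_iff] at h
          exact h.2
      have := Finset.card_le_card_of_injOn f hmaps hinjOn
      simpa using this
    rw [hEH, hEC]
    exact hinj
  · push_neg at hex
    obtain ⟨v0, hv0⟩ := hex
    set G : SimpleGraph (Fin n) :=
      { Adj := fun x y => (H.Adj x y ∧ ¬inTri x ∧ ¬inTri y) ∨ (x = v0 ∧ inTri y)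
          ∨ (y = v0 ∧ inTri x)
        symm := ⟨by
          rintro x y (⟨h1, h2, h3⟩ | ⟨h1, h2⟩ | ⟨h1, h2⟩)
          · exact Or.inl ⟨h1.symm, h3, h2⟩
          · exact Or.inr (Or.inr ⟨h1, h2⟩)
          · exact Or.inr (Or.inl ⟨h1, h2⟩)⟩
        loopless := ⟨by
          rintro x (⟨h1, _, _⟩ | ⟨h1, h2⟩ | ⟨h1, h2⟩)
          · exact H.loopless.irrefl x h1
          · exact hv0 (h1 ▸ h2)
          · exact hv0 (h1 ▸ h2)⟩ } with hG
    have hstar : ∀ x y, inTri x → G.Adj x y → y = v0 := by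
      rintro x y hx (⟨h1, h2, h3⟩ | ⟨h1, h2⟩ | ⟨h1, h2⟩)
      · exact absurd hx h2
      · exact absurd (h1 ▸ hx) hv0
      · exact h1
    have hH2G : ∀ a b, ¬inTri a → ¬inTri b → (G.Adj a b ↔ H.Adj a b) := by
      intro a b ha hb
      constructor
      · rintro (⟨h1, _, _⟩ | ⟨h1, h2⟩ | ⟨h1, h2⟩)
        · exact h1
        · exact absurd h2 hb
        · exact absurd h2 ha
      · intro h
        exact Or.inl ⟨h, ha, hb⟩
    have hfree : C3C4Free G := by
      constructor
      · intro x y z hxy hyz hxz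
        rcases em (inTri x) with hx | hx
        · have h1 := hstar x y hx hxy
          have h2 := hstar x z hx hxz
          rw [h1] at hyz
          rw [h2] at hyz
          exact G.loopless.irrefl v0 hyz
        rcases em (inTri y) with hy | hy
        · have h1 := hstar y z hy hyz
          have h2 := hstar y x hy hxy.symm
          rw [h2] at hxz
          rw [h1] at hxz
          exact G.loopless.irrefl v0 hxz
        rcases em (inTri z) with hz | hz
        · have h1 := hstar z x hz hxz.symm
          have h2 := hstar z y hz hyz.symm
          rw [h1] at hxy
          rw [h2] at hxy
          exact G.loopless.irrefl v0 hxy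
        · have e1 := (hH2G x y hx hy).mp hxy
          have e2 := (hH2G x z hx hz).mp hxz
          have e3 := (hH2G y z hy hz).mp hyz
          exact hx ⟨y, z, e1, e2, e3⟩
      · intro a b c d hac hbd e1 e2 e3 e4
        rcases em (inTri a) with ha | ha
        · have h1 := hstar a b ha e1
          have h2 := hstar a d ha e4.symm
          exact hbd (h1.trans h2.symm)
        rcases em (inTri b) with hb | hb
        · have h1 := hstar b c hb e2
          have h2 := hstar b a hb e1.symm
          exact hac (h2.trans h1.symm)
        rcases em (inTri c) with hc | hc
        · have h1 := hstar c d hc e3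
          have h2 := hstar c b hc e2.symm
          exact hbd (h2.trans h1.symm)
        rcases em (inTri d) with hd | hd
        · have h1 := hstar d a hd e4
          have h2 := hstar d c hd e3.symm
          exact hac (h1.trans h2.symm)
        · exact hL2 a b c d hac hbd ((hH2G a b ha hb).mp e1) ((hH2G b c hb hc).mp e2)
            ((hH2G c d hc hd).mp e3) ((hH2G d a hd ha).mp e4)
    refine ⟨G, hfree, ?_⟩
    set Gpairs : Finset (Fin n × Fin n) :=
      (univ ×ˢ univ).filter (fun p => p.1 < p.2 ∧ G.Adj p.1 p.2) with hGpairs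
    have hshape : ∀ p : Fin n × Fin n, p ∈ Gpairs.filter (fun p => inTri p.1 ∨ inTri p.2) →
        (p.1 = v0 ∧ inTri p.2 ∧ v0 < p.2) ∨ (p.2 = v0 ∧ inTri p.1 ∧ p.1 < v0) := by
      intro p hp
      rw [Finset.mem_filter, hGpairs, Finset.mem_filter] at hp
      obtain ⟨⟨_, hlt, hadj⟩, hQ⟩ := hp
      rcases hadj with ⟨_, h2, h3⟩ | ⟨h1, h2⟩ | ⟨h1, h2⟩
      · rcases hQ with h | h
        · exact absurd h h2
        · exact absurd h h3
      · exact Or.inl ⟨h1, h2, h1 ▸ hlt⟩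
      · exact Or.inr ⟨h1, h2, h1 ▸ hlt⟩
    have hstarcount : (Gpairs.filter (fun p => inTri p.1 ∨ inTri p.2)).card = Δf.card := by
      refine Finset.card_nbij' (fun p => if p.1 = v0 then p.2 else p.1)
        (fun x => if v0 < x then (v0, x) else (x, v0)) ?_ ?_ ?_ ?_
      · intro p hp
        dsimp only
        rcases hshape p hp with ⟨h1, h2, _⟩ | ⟨h1, h2, h3⟩
        · rw [if_pos h1, hΔf, Finset.mem_coe, Finset.mem_filter]
          exact ⟨Finset.mem_univ _, h2⟩
        · rw [if_neg (ne_of_lt h3), hΔf, Finset.mem_coe, Finset.mem_filter]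
          exact ⟨Finset.mem_univ _, h2⟩
      · intro x hx
        dsimp only
        rw [hΔf, Finset.mem_coe, Finset.mem_filter] at hx
        have hxv : x ≠ v0 := fun h => hv0 (h ▸ hx.2)
        rcases lt_or_gt_of_ne hxv with h | h
        · rw [if_neg (not_lt.mpr h.le), Finset.mem_coe, Finset.mem_filter, hGpairs, Finset.mem_filter]
          exact ⟨⟨by simp, h, Or.inr (Or.inr ⟨rfl, hx.2⟩)⟩, Or.inl hx.2⟩
        · rw [if_pos h, Finset.mem_coe, Finset.mem_filter, hGpairs, Finset.mem_filter]
          exact ⟨⟨by simp, h, Or.inr (Or.inl ⟨rfl, hx.2⟩)⟩, Or.inr hx.2⟩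
      · intro p hp
        dsimp only
        rcases hshape p hp with ⟨h1, _, h3⟩ | ⟨h1, h2, h3⟩
        · rw [if_pos h1, if_pos h3]
          exact Prod.ext h1.symm rfl
        · rw [if_neg (ne_of_lt h3), if_neg (not_lt.mpr h3.le)]
          exact Prod.ext rfl h1.symm
      · intro x hx
        dsimp only
        rw [hΔf, Finset.mem_coe, Finset.mem_filter] at hx
        have hxv : x ≠ v0 := fun h => hv0 (h ▸ hx.2)
        rcases lt_or_gt_of_ne hxv with h | h
        · rw [if_neg (not_lt.mpr h.le), if_neg hxv]
        · rw [if_pos h, if_pos rfl]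
    have hnotQ : Gpairs.filter (fun p => ¬(inTri p.1 ∨ inTri p.2))
        = Hpairs.filter (fun p => ¬(inTri p.1 ∨ inTri p.2)) := by
      ext p
      simp only [hGpairs, hHpairs, Finset.mem_filter]
      constructor
      · rintro ⟨⟨hm, hlt, hadj⟩, hQ⟩
        push_neg at hQ
        exact ⟨⟨hm, hlt, (hH2G _ _ hQ.1 hQ.2).mp hadj⟩, by push_neg; exact hQ⟩
      · rintro ⟨⟨hm, hlt, hadj⟩, hQ⟩
        push_neg at hQ
        exact ⟨⟨hm, hlt, (hH2G _ _ hQ.1 hQ.2).mpr hadj⟩, by push_neg; exact hQ⟩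
    have hcardH := Finset.card_filter_add_card_filter_not
      (s := Hpairs) (p := fun p => inTri p.1 ∨ inTri p.2)
    have hcardG := Finset.card_filter_add_card_filter_not
      (s := Gpairs) (p := fun p => inTri p.1 ∨ inTri p.2)
    have hEH : ec H = Hpairs.card := by
      rw [hHpairs]; unfold ec; congr 1 <;> apply Finset.filter_congr_decidable
    have hEG : ec G = Gpairs.card := by
      rw [hGpairs]; unfold ec; congr 1 <;> apply Finset.filter_congr_decidable
    have hHQ : (Hpairs.filter (fun p => inTri p.1 ∨ inTri p.2)).card = Δf.card := by
      rw [hHsplit]; exact step2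
    have hcn : (Gpairs.filter (fun p => ¬(inTri p.1 ∨ inTri p.2))).card
        = (Hpairs.filter (fun p => ¬(inTri p.1 ∨ inTri p.2))).card := by rw [hnotQ]
    omega

theorem product_bound_mult_le_two (n : ℕ) (hn : 4 ≤ n) (w : Fin n → Fin n → ℕ)
    (hsym : ∀ i j, w i j = w j i)
    (h49 : IsNSQ n 4 9 w)
    (hle2 : ∀ i j : Fin n, w i j ≤ 2) :
    mgP n w Finset.univ ≤ 2 ^ exC34 n := by
  classical
  by_cases h0 : ∃ p ∈ pairs n Finset.univ, w p.1 p.2 = 0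
  · obtain ⟨p, hp, hp0⟩ := h0
    rw [mgP, Finset.prod_eq_zero hp hp0]
    exact Nat.zero_le _
  · push_neg at h0
    have hpos : ∀ i j : Fin n, i ≠ j → 1 ≤ w i j := by
      intro i j hij
      rcases lt_or_gt_of_ne hij with h | h
      · have hm : (i, j) ∈ pairs n Finset.univ := by
          rw [pairs, Finset.mem_filter]; exact ⟨by simp, h⟩
        exact Nat.one_le_iff_ne_zero.mpr (h0 _ hm)
      · have hm : (j, i) ∈ pairs n Finset.univ := by
          rw [pairs, Finset.mem_filter]; exact ⟨by simp, h⟩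
        rw [hsym]
        exact Nat.one_le_iff_ne_zero.mpr (h0 _ hm)
    set H : SimpleGraph (Fin n) :=
      { Adj := fun x y => x ≠ y ∧ w x y = 2
        symm := ⟨by
          rintro x y ⟨h1, h2⟩
          exact ⟨h1.symm, by rw [hsym]; exact h2⟩⟩
        loopless := ⟨fun x h => h.1 rfl⟩ } with hH
    have hs4 := sum_four n w hsym h49
    have hL1 : ∀ x y z u : Fin n, H.Adj x y → H.Adj y z → H.Adj x z →
        u ≠ x → u ≠ y → u ≠ z → ¬ H.Adj x u := by
      rintro x y z u ⟨hxy, wxy⟩ ⟨hyz, wyz⟩ ⟨hxz, wxz⟩ hux huy huz ⟨hxu, wxu⟩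
      have h9 := hs4 x y z u hxy hxz hux.symm hyz huy.symm huz.symm
      have p1 := hpos y u (fun h => huy h.symm)
      have p2 := hpos z u (fun h => huz h.symm)
      omega
    have hL2 : ∀ a b c d : Fin n, a ≠ c → b ≠ d → H.Adj a b → H.Adj b c → H.Adj c d →
        H.Adj d a → False := by
      rintro a b c d hac hbd ⟨hab, wab⟩ ⟨hbc, wbc⟩ ⟨hcd, wcd⟩ ⟨hda, wda⟩
      have h9 := hs4 a b c d hab hac hda.symm hbc hbd hcd
      have p1 := hpos a c hac
      have p2 := hpos b d hbd
      have wad : w a d = 2 := by rw [hsym]; exact wda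
      omega
    obtain ⟨G, hfree, hle⟩ := key hn H hL1 hL2
    have hprod : mgP n w Finset.univ = 2 ^ ec H := by
      rw [mgP,
        ← Finset.prod_filter_mul_prod_filter_not (pairs n Finset.univ) (fun p => w p.1 p.2 = 2)]
      have hone : ∏ p ∈ (pairs n Finset.univ).filter (fun p => ¬ w p.1 p.2 = 2),
          w p.1 p.2 = 1 := by
        apply Finset.prod_eq_one
        intro p hp
        rw [Finset.mem_filter, pairs, Finset.mem_filter] at hp
        have h1 := hpos p.1 p.2 (ne_of_lt hp.1.2)
        have h2 := hle2 p.1 p.2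
        omega
      have htwo : ∏ p ∈ (pairs n Finset.univ).filter (fun p => w p.1 p.2 = 2),
          w p.1 p.2 = 2 ^ ec H := by
        rw [Finset.prod_congr rfl (fun p hp => (Finset.mem_filter.mp hp).2),
          Finset.prod_const]
        congr 1
        rw [pairs, Finset.filter_filter]
        unfold ec
        apply card_filter_ext
        intro p
        constructor
        · rintro ⟨hlt, hw⟩
          exact ⟨hlt, ne_of_lt hlt, hw⟩
        · rintro ⟨hlt, _, hw⟩
          exact ⟨hlt, hw⟩
      rw [htwo, hone, mul_one]
    rw [hprod]
    have hm : Nat.card G.edgeSet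
        ∈ {m | ∃ G' : SimpleGraph (Fin n), C3C4Free G' ∧ m = Nat.card G'.edgeSet} :=
      ⟨G, hfree, rfl⟩
    have hbdd : BddAbove
        {m | ∃ G' : SimpleGraph (Fin n), C3C4Free G' ∧ m = Nat.card G'.edgeSet} := by
      refine ⟨Nat.card (Sym2 (Fin n)), ?_⟩
      rintro m ⟨G', _, rfl⟩
      exact Nat.card_le_card_of_injective _ Subtype.val_injective
    have hss : Nat.card G.edgeSet ≤ exC34 n := le_csSup hbdd hm
    calc 2 ^ ec H ≤ 2 ^ ec G := Nat.pow_le_pow_right (by norm_num) hle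
      _ = 2 ^ Nat.card G.edgeSet := by rw [card_edgeSet_eq_ec]
      _ ≤ 2 ^ exC34 n := Nat.pow_le_pow_right (by norm_num) hss
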